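/- Let G ⊆ [m₁]×[m₂] be b-sparse and M ∈ ℝ^{m₁×m₂} with rank(M) = r. Then ‖G(M)‖ ≤ √(b ∧ r) · ‖M‖, and consequently ‖M − G(M)‖ ≤ (√(b ∧ r) + 1)‖M‖. -/

import Mathlib

open scoped Matrix.Norms.L2Operator

/-- `restrict G M` is the matrix `M` with all entries outside the index set `G` set to zero. -/
def Matrix.restrict {m₁ m₂ : ℕ} (G : Finset (Fin m₁ × Fin m₂))
    (M : Matrix (Fin m₁) (Fin m₂) ℝ) : Matrix (Fin m₁) (Fin m₂) ℝ :=
  fun i j => if (i, j) ∈ G then M i j else 0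

/-- `G` is `b`-sparse: every row and every column contains at most `b` indices of `G`. -/
def Matrix.BSparse {m₁ m₂ : ℕ} (G : Finset (Fin m₁ × Fin m₂)) (b : ℕ) : Prop :=
  (∀ i : Fin m₁, (G.filter (fun q => q.1 = i)).card ≤ b) ∧
  (∀ j : Fin m₂, (G.filter (fun q => q.2 = j)).card ≤ b)

open scoped Matrix

open Finset in
lemma euclid_norm_sq {k : ℕ} (v : EuclideanSpace ℝ (Fin k)) :
    ‖v‖ ^ 2 = ∑ i, (v i) ^ 2 := by
  rw [EuclideanSpace.norm_eq, Real.sq_sqrt (by positivity)]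
  simp [Real.norm_eq_abs, sq_abs]

open Finset in
lemma opnorm_le_of_sq {m₁ m₂ : ℕ} (A : Matrix (Fin m₁) (Fin m₂) ℝ) {C : ℝ} (hC : 0 ≤ C)
    (h : ∀ x : Fin m₂ → ℝ, ∑ i, ((A *ᵥ x) i) ^ 2 ≤ C ^ 2 * ∑ j, (x j) ^ 2) : ‖A‖ ≤ C := by
  rw [Matrix.l2_opNorm_def]
  refine ContinuousLinearMap.opNorm_le_bound _ hC fun x => ?_
  have key : ‖((Matrix.toEuclideanLin.trans LinearMap.toContinuousLinearMap) A) x‖ ^ 2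
      ≤ (C * ‖x‖) ^ 2 := by
    rw [euclid_norm_sq, mul_pow, euclid_norm_sq]
    exact h x
  have := Real.sqrt_le_sqrt key
  rwa [Real.sqrt_sq (norm_nonneg _), Real.sqrt_sq (by positivity)] at this

open Finset in
lemma col_sq_sum_le {m₁ m₂ : ℕ} (A : Matrix (Fin m₁) (Fin m₂) ℝ) (j : Fin m₂) :
    ∑ i, (A i j) ^ 2 ≤ ‖A‖ ^ 2 := by
  have h := Matrix.l2_opNorm_mulVec A ((WithLp.equiv 2 (Fin m₂ → ℝ)).symm (Pi.single j 1))
  have hxn : ‖(WithLp.equiv 2 (Fin m₂ → ℝ)).symm (Pi.single j 1)‖ = 1 := by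
    have : ‖(WithLp.equiv 2 (Fin m₂ → ℝ)).symm (Pi.single j 1)‖ ^ 2 = 1 := by
      rw [euclid_norm_sq]
      simp [Pi.single_apply]
    nlinarith [norm_nonneg ((WithLp.equiv 2 (Fin m₂ → ℝ)).symm (Pi.single j 1))]
  rw [hxn, mul_one] at h
  have h2 : ‖(EuclideanSpace.equiv (Fin m₁) ℝ).symm
      (A *ᵥ ((WithLp.equiv 2 (Fin m₂ → ℝ)).symm (Pi.single j 1)))‖ ^ 2 = ∑ i, (A i j) ^ 2 := by
    rw [euclid_norm_sq]
    congr 1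
    ext i
    congr 1
    show (A *ᵥ Pi.single j 1) i = A i j
    simp [Matrix.mulVec_single]
  nlinarith [norm_nonneg A, norm_nonneg ((EuclideanSpace.equiv (Fin m₁) ℝ).symm
      (A *ᵥ ((WithLp.equiv 2 (Fin m₂ → ℝ)).symm (Pi.single j 1)))), h]

open Finset in
lemma opnorm_le_sqrt_frobenius {m₁ m₂ : ℕ} (A : Matrix (Fin m₁) (Fin m₂) ℝ) :
    ‖A‖ ≤ Real.sqrt (∑ i, ∑ j, (A i j) ^ 2) := by
  refine opnorm_le_of_sq A (Real.sqrt_nonneg _) fun x => ?_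
  rw [Real.sq_sqrt (by positivity), Finset.sum_mul]
  refine Finset.sum_le_sum fun i _ => ?_
  calc ((A *ᵥ x) i) ^ 2 = (∑ j, A i j * x j) ^ 2 := by rfl
    _ ≤ (∑ j, (A i j) ^ 2) * ∑ j, (x j) ^ 2 :=
        Finset.sum_mul_sq_le_sq_mul_sq _ _ _

open Finset in
lemma frobenius_le_rank_mul_opnorm_sq {m₁ m₂ : ℕ} (M : Matrix (Fin m₁) (Fin m₂) ℝ) :
    ∑ i, ∑ j, (M i j) ^ 2 ≤ (M.rank : ℝ) * ‖M‖ ^ 2 := by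
  classical
  set A : Matrix (Fin m₂) (Fin m₂) ℝ := Mᴴ * M with hAdef
  have hA : A.IsHermitian := Matrix.isHermitian_conjTranspose_mul_self M
  have hMT : Mᴴ = Mᵀ := by ext i j; simp [Matrix.conjTranspose_apply]
  -- trace of A equals Frobenius norm squared
  have htr : A.trace = ∑ i, ∑ j, (M i j) ^ 2 := by
    rw [Matrix.trace, Finset.sum_comm]
    congr 1
    ext i
    simp only [Matrix.diag_apply, hAdef, Matrix.mul_apply, Matrix.conjTranspose_apply]
    congr 1
    ext j
    ring_nf
    simp [sq]
  -- trace of A equals sum of eigenvalues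
  have htr2 : A.trace = ∑ k, hA.eigenvalues k := by
    conv_lhs => rw [hA.spectral_theorem]
    rw [Unitary.conjStarAlgAut_apply, Matrix.trace_mul_cycle]
    have : (star (hA.eigenvectorUnitary : Matrix (Fin m₂) (Fin m₂) ℝ)) *
        (hA.eigenvectorUnitary : Matrix (Fin m₂) (Fin m₂) ℝ) = 1 :=
      Unitary.coe_star_mul_self _
    rw [this, Matrix.one_mul, Matrix.trace_diagonal]
    simp
  -- each eigenvalue is at most ‖M‖ ^ 2
  have heig : ∀ k, hA.eigenvalues k ≤ ‖M‖ ^ 2 := by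
    intro k
    have hmv := hA.mulVec_eigenvectorBasis k
    have hvnorm : ‖hA.eigenvectorBasis k‖ = 1 := hA.eigenvectorBasis.orthonormal.1 k
    have hb : ‖(EuclideanSpace.equiv (Fin m₂) ℝ).symm
        (A *ᵥ ((hA.eigenvectorBasis k).ofLp))‖
        ≤ ‖A‖ * ‖hA.eigenvectorBasis k‖ := Matrix.l2_opNorm_mulVec A _
    rw [hmv] at hb
    have hrfl : (EuclideanSpace.equiv (Fin m₂) ℝ).symm
        (hA.eigenvalues k • (hA.eigenvectorBasis k).ofLp)
        = hA.eigenvalues k • hA.eigenvectorBasis k := rfl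
    rw [hrfl, hvnorm, mul_one, norm_smul, hvnorm, mul_one, Real.norm_eq_abs] at hb
    have hAn : ‖A‖ = ‖M‖ ^ 2 := by
      rw [hAdef, Matrix.l2_opNorm_conjTranspose_mul_self, sq]
    calc hA.eigenvalues k ≤ |hA.eigenvalues k| := le_abs_self _
      _ ≤ ‖A‖ := hb
      _ = ‖M‖ ^ 2 := hAn
  -- number of nonzero eigenvalues equals the rank
  have hcard : (Finset.univ.filter fun k => hA.eigenvalues k ≠ 0).card = M.rank := by
    rw [← Fintype.card_subtype, ← hA.rank_eq_card_non_zero_eigs, hAdef, hMT,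
      Matrix.rank_transpose_mul_self]
  calc ∑ i, ∑ j, (M i j) ^ 2 = ∑ k, hA.eigenvalues k := by rw [← htr, htr2]
    _ = ∑ k ∈ Finset.univ.filter fun k => hA.eigenvalues k ≠ 0, hA.eigenvalues k := by
        exact (Finset.sum_filter_ne_zero _).symm
    _ ≤ (Finset.univ.filter fun k => hA.eigenvalues k ≠ 0).card • (‖M‖ ^ 2) :=
        Finset.sum_le_card_nsmul _ _ _ (fun k _ => heig k)
    _ = (M.rank : ℝ) * ‖M‖ ^ 2 := by rw [hcard, nsmul_eq_mul]

open Finset in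
lemma row_indicator_sum {m₁ m₂ : ℕ} (G : Finset (Fin m₁ × Fin m₂)) (i : Fin m₁) :
    ∑ j, (if (i, j) ∈ G then (1 : ℝ) else 0) = ((G.filter fun q => q.1 = i).card : ℝ) := by
  classical
  rw [Finset.sum_boole]
  congr 1
  refine Finset.card_bij' (fun j _ => (i, j)) (fun q _ => q.2) ?_ ?_ ?_ ?_
  · intro j hj
    simp only [Finset.mem_filter, Finset.mem_univ, true_and] at hj
    exact Finset.mem_filter.mpr ⟨hj, rfl⟩
  · intro q hq
    simp only [Finset.mem_filter] at hq
    obtain ⟨h1, h2⟩ := hq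
    refine Finset.mem_filter.mpr ⟨Finset.mem_univ _, ?_⟩
    have : ((i, q.2) : Fin m₁ × Fin m₂) = q := Prod.ext_iff.mpr ⟨h2.symm, rfl⟩
    rw [this]
    exact h1
  · intro j _
    rfl
  · intro q hq
    simp only [Finset.mem_filter] at hq
    exact Prod.ext_iff.mpr ⟨hq.2.symm, rfl⟩

theorem restrict_l2OpNorm_le_sqrt_min_rank {m₁ m₂ b r : ℕ}
    (G : Finset (Fin m₁ × Fin m₂)) (hG : Matrix.BSparse G b)
    (M : Matrix (Fin m₁) (Fin m₂) ℝ) (hrank : M.rank = r) :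
    ‖Matrix.restrict G M‖ ≤ Real.sqrt (min b r) * ‖M‖ ∧
    ‖M - Matrix.restrict G M‖ ≤ (Real.sqrt (min b r) + 1) * ‖M‖ := by
  classical
  set R := Matrix.restrict G M with hR
  -- bound 1 : ‖R‖ ≤ √b ‖M‖
  have hb : ‖R‖ ≤ Real.sqrt b * ‖M‖ := by
    refine opnorm_le_of_sq R (by positivity) fun x => ?_
    have hCsq : (Real.sqrt b * ‖M‖) ^ 2 = (b : ℝ) * ‖M‖ ^ 2 := by
      rw [mul_pow, Real.sq_sqrt (by positivity)]
    rw [hCsq]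
    set c : Fin m₁ → Fin m₂ → ℝ := fun i j => if (i, j) ∈ G then 1 else 0 with hc
    have hc01 : ∀ i j, c i j = 0 ∨ c i j = 1 := by
      intro i j; by_cases h : (i, j) ∈ G <;> simp [hc, h]
    have hcsq : ∀ i j, c i j ^ 2 = c i j := by
      intro i j; rcases hc01 i j with h | h <;> rw [h] <;> ring
    have hrow : ∀ i, ∑ j, c i j ≤ (b : ℝ) := by
      intro i
      rw [hc, row_indicator_sum]
      exact_mod_cast hG.1 i
    have step1 : ∀ i, ((R *ᵥ x) i) ^ 2 ≤ (b : ℝ) * ∑ j, c i j * (M i j) ^ 2 * (x j) ^ 2 := by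
      intro i
      have hRx : (R *ᵥ x) i = ∑ j, c i j * (c i j * M i j * x j) := by
        show ∑ j, R i j * x j = _
        refine Finset.sum_congr rfl fun j _ => ?_
        rcases hc01 i j with h | h <;>
          simp only [hR, Matrix.restrict, hc] at * <;>
          rcases Decidable.em ((i, j) ∈ G) with hm | hm <;> simp [hm] <;> ring
      rw [hRx]
      calc (∑ j, c i j * (c i j * M i j * x j)) ^ 2
          ≤ (∑ j, (c i j) ^ 2) * ∑ j, (c i j * M i j * x j) ^ 2 :=
            Finset.sum_mul_sq_le_sq_mul_sq _ _ _
        _ ≤ (b : ℝ) * ∑ j, c i j * (M i j) ^ 2 * (x j) ^ 2 := by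
            refine mul_le_mul ?_ ?_ (by positivity) (by positivity)
            · simp only [hcsq]; exact hrow i
            · refine le_of_eq (Finset.sum_congr rfl fun j _ => ?_)
              rw [mul_pow, mul_pow, hcsq]
    calc ∑ i, ((R *ᵥ x) i) ^ 2 ≤ ∑ i, (b : ℝ) * ∑ j, c i j * (M i j) ^ 2 * (x j) ^ 2 :=
          Finset.sum_le_sum fun i _ => step1 i
      _ = (b : ℝ) * ∑ j, (∑ i, c i j * (M i j) ^ 2) * (x j) ^ 2 := by
          rw [← Finset.mul_sum, Finset.sum_comm]
          congr 1
          refine Finset.sum_congr rfl fun j _ => ?_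
          rw [Finset.sum_mul]
      _ ≤ (b : ℝ) * ∑ j, ‖M‖ ^ 2 * (x j) ^ 2 := by
          refine mul_le_mul_of_nonneg_left (Finset.sum_le_sum fun j _ => ?_) (by positivity)
          refine mul_le_mul_of_nonneg_right ?_ (by positivity)
          calc ∑ i, c i j * (M i j) ^ 2 ≤ ∑ i, (M i j) ^ 2 := by
                refine Finset.sum_le_sum fun i _ => ?_
                rcases hc01 i j with h | h <;> rw [h] <;> nlinarith [sq_nonneg (M i j)]
            _ ≤ ‖M‖ ^ 2 := col_sq_sum_le M j
      _ = (b : ℝ) * ‖M‖ ^ 2 * ∑ j, (x j) ^ 2 := by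
          rw [← Finset.mul_sum, mul_assoc]
  -- bound 2 : ‖R‖ ≤ √r ‖M‖
  have hr : ‖R‖ ≤ Real.sqrt r * ‖M‖ := by
    have hRF : ∑ i, ∑ j, (R i j) ^ 2 ≤ ∑ i, ∑ j, (M i j) ^ 2 := by
      refine Finset.sum_le_sum fun i _ => Finset.sum_le_sum fun j _ => ?_
      simp only [hR, Matrix.restrict]
      rcases Decidable.em ((i, j) ∈ G) with hm | hm <;> simp [hm] <;> positivity
    have h2 := frobenius_le_rank_mul_opnorm_sq M
    rw [hrank] at h2
    calc ‖R‖ ≤ Real.sqrt (∑ i, ∑ j, (R i j) ^ 2) := opnorm_le_sqrt_frobenius R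
      _ ≤ Real.sqrt ((r : ℝ) * ‖M‖ ^ 2) := Real.sqrt_le_sqrt (le_trans hRF h2)
      _ = Real.sqrt r * ‖M‖ := by
          rw [Real.sqrt_mul (by positivity), Real.sqrt_sq (norm_nonneg _)]
  have hmin : ‖R‖ ≤ Real.sqrt (min b r) * ‖M‖ := by
    rcases le_total b r with h | h
    · rw [min_eq_left (by exact_mod_cast h : (b : ℝ) ≤ r)]; exact hb
    · rw [min_eq_right (by exact_mod_cast h : (r : ℝ) ≤ b)]; exact hr
  refine ⟨hmin, ?_⟩
  calc ‖M - R‖ ≤ ‖M‖ + ‖R‖ := norm_sub_le _ _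
    _ ≤ ‖M‖ + Real.sqrt (min b r) * ‖M‖ := by linarith
    _ = (Real.sqrt (min b r) + 1) * ‖M‖ := by ring
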